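/- The X-ray transform over closed geodesics is injective on L¹(𝕋²): if f ∈ L¹(𝕋²) and for every v ∈ ℤ² \ {0} one has I_v f(x) = 0 for a.e. x ∈ 𝕋², then f = 0 almost everywhere. -/

import Mathlib

noncomputable section
open MeasureTheory Real
open scoped ENNReal NNReal

instance : Fact ((0:ℝ) < 1) := ⟨one_pos⟩

/-- The flat torus `𝕋ⁿ = ℝⁿ/ℤⁿ`, with the probability Haar (Lebesgue) measure. -/
abbrev Torus (n : ℕ) := Fin n → AddCircle (1:ℝ)

/-- The quotient map `π : ℝⁿ → 𝕋ⁿ`. -/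
def tmap {n : ℕ} (x : Fin n → ℝ) : Torus n := fun i => (x i : AddCircle (1:ℝ))

/-- The character `x ↦ e^{2πi k·x}` on the torus. -/
def char {n : ℕ} (k : Fin n → ℤ) (x : Torus n) : ℂ := ∏ i, fourier (k i) (x i)

/-- The Fourier coefficient `f̂(k) = ∫ f(x) e^{−2πi k·x} dx`. -/
def fCoeff {n : ℕ} (f : Torus n → ℂ) (k : Fin n → ℤ) : ℂ := ∫ x, char (-k) x * f x

/-- The X-ray transform on `𝕋²` in direction `v ∈ ℤ² \ {0}`:
`I_v f(x) = ∫₀¹ f(x + t v) dt`. -/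
def xray (v : Fin 2 → ℤ) (f : Torus 2 → ℂ) (x : Torus 2) : ℂ :=
  ∫ t in (0:ℝ)..1, f (x + tmap fun i => t * (v i : ℝ))

open AddCircle
open scoped BoundedContinuousFunction

section Aux

variable {X : Type*} [MeasurableSpace X] [PseudoEMetricSpace X] [BorelSpace X]
  [SecondCountableTopology X]

theorem ae_eq_zero_of_forall_bcf {μ : Measure X} [IsFiniteMeasure μ]
    (f : X → ℂ) (hf : Integrable f μ)
    (h : ∀ g : X →ᵇ ℝ, ∫ x, (g x : ℂ) * f x ∂μ = 0) :
    f =ᵐ[μ] 0 := by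
  set ν : Measure X := μ.withDensity (fun x => (‖f x‖₊ : ℝ≥0∞)) with hν
  have hfm : AEMeasurable (fun x => (‖f x‖₊ : ℝ≥0)) μ := hf.1.nnnorm.aemeasurable
  have hνfin : IsFiniteMeasure ν := by
    constructor
    rw [hν, withDensity_apply _ MeasurableSet.univ, Measure.restrict_univ]
    exact hf.2
  have key : ∀ (h' : X → ℝ), ∫ x, h' x ∂ν = ∫ x, ‖f x‖ * h' x ∂μ := by
    intro h'
    rw [hν, integral_withDensity_eq_integral_smul₀ hfm h']
    simp [NNReal.smul_def, coe_nnnorm]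
  refine ae_eq_zero_of_forall_setIntegral_eq_of_sigmaFinite
    (fun s hs _ => hf.integrableOn) (fun s hs _ => ?_)
  set ind : X → ℝ := s.indicator (fun _ => (1:ℝ)) with hind
  have hzero : ∀ ε : ℝ, 0 < ε → ‖∫ x in s, f x ∂μ‖ ≤ ε := by
    intro ε hε
    obtain ⟨g, hg, hgint⟩ :=
      (Integrable.indicator (integrable_const (1:ℝ)) hs (μ := ν)).exists_boundedContinuous_integral_sub_le hε
    have hgf : Integrable (fun x => (g x : ℂ) * f x) μ :=
      hf.bdd_mul (Continuous.aestronglyMeasurable (by continuity))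
        (c := ‖g‖) (Filter.Eventually.of_forall fun x => by simpa using g.norm_coe_le_norm x)
    have heq : (fun x => ((ind x : ℝ) : ℂ) * f x) = s.indicator f := by
      ext x
      by_cases hx : x ∈ s <;> simp [hind, Set.indicator_apply, hx]
    have hindf : Integrable (fun x => ((ind x : ℝ) : ℂ) * f x) μ := by
      rw [heq]; exact hf.indicator hs
    have h1 : ∫ x in s, f x ∂μ = ∫ x, ((ind x : ℝ) : ℂ) * f x ∂μ := by
      rw [← integral_indicator hs, heq]
    rw [h1, ← sub_zero (∫ x, _ ∂μ), ← h g, ← integral_sub hindf hgf]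
    calc ‖∫ x, (((ind x : ℝ) : ℂ) * f x - (g x : ℂ) * f x) ∂μ‖
        ≤ ∫ x, ‖((ind x : ℝ) : ℂ) * f x - (g x : ℂ) * f x‖ ∂μ :=
          norm_integral_le_integral_norm _
      _ = ∫ x, ‖f x‖ * ‖ind x - g x‖ ∂μ := by
          congr 1; ext x
          rw [← sub_mul, norm_mul, mul_comm, ← Complex.ofReal_sub, Complex.norm_real]
      _ = ∫ x, ‖ind x - g x‖ ∂ν := (key _).symm
      _ ≤ ε := hg
  have hle : ‖∫ x in s, f x ∂μ‖ ≤ 0 := le_of_forall_gt_imp_ge_of_dense (fun ε hε => hzero ε hε)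
  simpa using norm_le_zero_iff.1 hle

theorem circle_ae_eq_zero (f : AddCircle (1:ℝ) → ℂ)
    (hf : Integrable f (volume : Measure (AddCircle (1:ℝ))))
    (h : ∀ n : ℤ, ∫ x, fourier n x * f x = 0) :
    f =ᵐ[(volume : Measure (AddCircle (1:ℝ)))] 0 := by
  set μ : Measure (AddCircle (1:ℝ)) := volume
  -- the continuous linear functional g ↦ ∫ g * f
  have hint : ∀ g : C(AddCircle (1:ℝ), ℂ), Integrable (fun x => g x * f x) μ := by
    intro g
    exact hf.bdd_mul g.continuous.aestronglyMeasurable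
      (c := ‖g‖) (Filter.Eventually.of_forall fun x => g.norm_coe_le_norm x)
  set L₀ : C(AddCircle (1:ℝ), ℂ) →ₗ[ℂ] ℂ :=
    { toFun := fun g => ∫ x, g x * f x ∂μ
      map_add' := by
        intro g g'
        simp only [ContinuousMap.add_apply, add_mul]
        rw [integral_add (hint g) (hint g')]
      map_smul' := by
        intro c g
        simp only [ContinuousMap.smul_apply, smul_eq_mul, mul_assoc, RingHom.id_apply]
        rw [integral_const_mul] } with hL₀
  have hbound : ∀ g : C(AddCircle (1:ℝ), ℂ), ‖L₀ g‖ ≤ (∫ x, ‖f x‖ ∂μ) * ‖g‖ := by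
    intro g
    calc ‖∫ x, g x * f x ∂μ‖ ≤ ∫ x, ‖g x * f x‖ ∂μ := norm_integral_le_integral_norm _
      _ ≤ ∫ x, ‖g‖ * ‖f x‖ ∂μ := by
          apply integral_mono_of_nonneg (Filter.Eventually.of_forall fun x => norm_nonneg _)
            (hf.norm.const_mul _)
          refine Filter.Eventually.of_forall fun x => ?_
          show ‖g x * f x‖ ≤ ‖g‖ * ‖f x‖
          rw [norm_mul]
          exact mul_le_mul_of_nonneg_right (g.norm_coe_le_norm x) (norm_nonneg _)
      _ = (∫ x, ‖f x‖ ∂μ) * ‖g‖ := by rw [integral_const_mul, mul_comm]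
  set L : C(AddCircle (1:ℝ), ℂ) →L[ℂ] ℂ := LinearMap.mkContinuous L₀ _ hbound with hL
  -- L vanishes on the span of the fourier monomials, which is dense
  have hLf : ∀ n : ℤ, L (fourier n) = 0 := fun n => h n
  have hdense : Dense ((Submodule.span ℂ (Set.range (@fourier (1:ℝ)))) : Set C(AddCircle (1:ℝ), ℂ)) := by
    rw [dense_iff_closure_eq]
    have := span_fourier_closure_eq_top (T := (1:ℝ))
    have h2 := congrArg (fun (S : Submodule ℂ C(AddCircle (1:ℝ), ℂ)) => (S : Set C(AddCircle (1:ℝ), ℂ))) this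
    simpa [Submodule.topologicalClosure_coe] using h2
  have hLzero : L = 0 := by
    apply ContinuousLinearMap.ext_on hdense
    rintro g ⟨n, rfl⟩
    exact hLf n
  -- now test against all bounded continuous real functions
  apply ae_eq_zero_of_forall_bcf f hf
  intro g
  have : L ⟨fun x => (g x : ℂ), by continuity⟩ = 0 := by rw [hLzero]; rfl
  exact this

-- fourier is additive in the point
theorem fourier_pt_add {T : ℝ} [hT : Fact (0 < T)] (n : ℤ) (x y : AddCircle T) :
    fourier n (x + y) = fourier n x * fourier n y := by
  simp only [fourier_apply, smul_add, toCircle_add, Circle.coe_mul]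

theorem char_add {n : ℕ} (k : Fin n → ℤ) (x y : Torus n) :
    char k (x + y) = char k x * char k y := by
  simp only [char, Pi.add_apply, fourier_pt_add, Finset.prod_mul_distrib]

theorem norm_char {n : ℕ} (k : Fin n → ℤ) (x : Torus n) : ‖char k x‖ = 1 := by
  simp only [char, norm_prod]
  exact Finset.prod_eq_one fun i _ => Circle.norm_coe _

theorem char_continuous {n : ℕ} (k : Fin n → ℤ) : Continuous (char k) :=
  continuous_finset_prod _ fun i _ =>
    (fourier (k i)).continuous.comp (continuous_apply i)

theorem tmap_continuous {n : ℕ} : Continuous (tmap (n := n)) :=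
  continuous_pi fun i => (AddCircle.continuous_mk' 1).comp (continuous_apply i)

theorem char_tmap {n : ℕ} (k : Fin n → ℤ) (u : Fin n → ℝ) :
    char k (tmap u) = Complex.exp (2 * π * Complex.I * (∑ i, (k i : ℂ) * (u i : ℂ))) := by
  have step : ∀ i : Fin n, fourier (k i) (tmap u i)
      = Complex.exp (2 * π * Complex.I * ((k i : ℂ) * (u i : ℂ))) := by
    intro i
    show fourier (k i) ((u i : ℝ) : AddCircle (1:ℝ))
      = Complex.exp (2 * π * Complex.I * ((k i : ℂ) * (u i : ℂ)))
    rw [fourier_coe_apply]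
    push_cast
    ring_nf
  rw [char]
  simp_rw [step]
  rw [← Complex.exp_sum, Finset.mul_sum]


theorem norm_fourier_eq_one (n : ℤ) (x : AddCircle (1:ℝ)) : ‖fourier n x‖ = 1 :=
  Circle.norm_coe _

theorem torus_ae_eq_zero (f : Torus 2 → ℂ)
    (hf : Integrable f (volume : Measure (Torus 2)))
    (h : ∀ k : Fin 2 → ℤ, fCoeff f k = 0) :
    f =ᵐ[(volume : Measure (Torus 2))] 0 := by
  set A := AddCircle (1:ℝ)
  set e : (Fin 2 → A) ≃ᵐ A × A := MeasurableEquiv.finTwoArrow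
  have hmp : MeasurePreserving e (volume : Measure (Torus 2)) (volume : Measure (A × A)) :=
    volume_preserving_finTwoArrow A
  set P : Measure (A × A) := (volume : Measure (A × A))
  have hP : P = (volume : Measure A).prod (volume : Measure A) := rfl
  set f' : A × A → ℂ := fun p => f (e.symm p) with hf'def
  have hfe : ∀ x : Torus 2, f' (e x) = f x := fun x => by
    simp [hf'def, e.symm_apply_apply]
  have hf' : Integrable f' P := by
    have := ((hmp.symm e).integrable_comp hf.aestronglyMeasurable).2 hf
    exact this
  -- transfer the Fourier coefficients
  have hcoef : ∀ k₁ k₂ : ℤ,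
      ∫ p, fourier k₁ p.1 * (fourier k₂ p.2 * f' p) ∂P = 0 := by
    intro k₁ k₂
    have := hmp.integral_comp e.measurableEmbedding
      (fun p : A × A => fourier k₁ p.1 * (fourier k₂ p.2 * f' p))
    rw [← this]
    have h2 := h ![-k₁, -k₂]
    rw [fCoeff] at h2
    rw [← h2]
    apply integral_congr_ae
    refine Filter.Eventually.of_forall fun x => ?_
    show fourier k₁ ((e x).1) * (fourier k₂ ((e x).2) * f' (e x)) = char (-![-k₁, -k₂]) x * f x
    rw [hfe, char, Fin.prod_univ_two]
    simp [e, mul_assoc]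
  -- integrability of the two-character multiple
  have hH : ∀ k₂ : ℤ, Integrable (fun p : A × A => fourier k₂ p.2 * f' p) P := by
    intro k₂
    exact hf'.bdd_mul (((fourier k₂).continuous.comp continuous_snd).aestronglyMeasurable)
      (c := 1) (Filter.Eventually.of_forall fun p => le_of_eq (norm_fourier_eq_one _ _))
  have hH2 : ∀ k₁ k₂ : ℤ, Integrable
      (fun p : A × A => fourier k₁ p.1 * (fourier k₂ p.2 * f' p)) P := by
    intro k₁ k₂
    exact (hH k₂).bdd_mul (((fourier k₁).continuous.comp continuous_fst).aestronglyMeasurable)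
      (c := 1) (Filter.Eventually.of_forall fun p => le_of_eq (norm_fourier_eq_one _ _))
  -- define partial Fourier coefficients in y
  have hg : ∀ k₂ : ℤ, (fun x => ∫ y, fourier k₂ y * f' (x, y)) =ᵐ[(volume : Measure A)] 0 := by
    intro k₂
    apply circle_ae_eq_zero _ ((hH k₂).integral_prod_left)
    intro n
    have swap : ∫ x, ∫ y, (fourier n x * (fourier k₂ y * f' (x, y)))
        = ∫ p, fourier n p.1 * (fourier k₂ p.2 * f' p) ∂P := by
      rw [hP]
      exact integral_integral (by exact hH2 n k₂)
    have lhs : ∫ x, fourier n x * ∫ y, fourier k₂ y * f' (x, y)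
        = ∫ x, ∫ y, (fourier n x * (fourier k₂ y * f' (x, y))) := by
      congr 1
      ext x
      rw [integral_const_mul]
    rw [lhs, swap, hcoef n k₂]
  have hae1 : ∀ᵐ x ∂(volume : Measure A), ∀ k₂ : ℤ,
      (∫ y, fourier k₂ y * f' (x, y)) = 0 := by
    rw [ae_all_iff]
    intro k₂
    exact hg k₂
  have hae2 : ∀ᵐ x ∂(volume : Measure A), Integrable (fun y => f' (x, y))
      (volume : Measure A) := hf'.prod_right_ae
  have hae3 : ∀ᵐ x ∂(volume : Measure A),
      (fun y => f' (x, y)) =ᵐ[(volume : Measure A)] 0 := by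
    filter_upwards [hae1, hae2] with x h1 h2
    exact circle_ae_eq_zero _ h2 (fun n => h1 n)
  -- pass to a measurable representative
  set F : A × A → ℂ := hf'.1.mk f' with hFdef
  have hFeq : f' =ᵐ[P] F := hf'.1.ae_eq_mk
  have hFm : StronglyMeasurable F := hf'.1.stronglyMeasurable_mk
  have hae4 : ∀ᵐ x ∂(volume : Measure A), ∀ᵐ y ∂(volume : Measure A), f' (x, y) = F (x, y) := by
    have := Measure.ae_ae_of_ae_prod (by rw [← hP]; exact hFeq)
    exact this
  have hae5 : ∀ᵐ x ∂(volume : Measure A), ∀ᵐ y ∂(volume : Measure A), F (x, y) = 0 := by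
    filter_upwards [hae3, hae4] with x h3 h4
    filter_upwards [h3, h4] with y hy3 hy4
    rw [← hy4]; exact hy3
  have hS : MeasurableSet {p : A × A | F p ≠ 0} :=
    (hFm.measurable (MeasurableSet.singleton 0).compl : MeasurableSet (F ⁻¹' {0}ᶜ))
  have hF0 : F =ᵐ[P] 0 := by
    rw [Filter.EventuallyEq, ae_iff]
    have : {p : A × A | ¬ F p = (0 : (A × A → ℂ)) p} = {p : A × A | F p ≠ 0} := rfl
    rw [this, hP, Measure.measure_prod_null hS]
    filter_upwards [hae5] with x hx
    rw [ae_iff] at hx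
    convert hx using 2
    all_goals rfl
  have hf'0 : f' =ᵐ[P] 0 := hFeq.trans hF0
  have := hmp.quasiMeasurePreserving.ae_eq_comp hf'0
  have hfinal : (fun x : Torus 2 => f' (e x)) =ᵐ[(volume : Measure (Torus 2))] 0 := this
  have heq : (fun x : Torus 2 => f' (e x)) = f := funext hfe
  rwa [heq] at hfinal

theorem fCoeff_eq_zero_of_xray
    (f : Torus 2 → ℂ) (hf : Integrable f (volume : Measure (Torus 2)))
    (h : ∀ v : Fin 2 → ℤ, v ≠ 0 → ∀ᵐ x : Torus 2, xray v f x = 0)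
    (k : Fin 2 → ℤ) : fCoeff f k = 0 := by
  classical
  set μT : Measure (Torus 2) := volume
  -- choose a direction orthogonal to k
  set v : Fin 2 → ℤ := if k = 0 then ![1, 0] else ![-(k 1), k 0] with hv_def
  have hv : v ≠ 0 := by
    by_cases hk : k = 0
    · simp only [hv_def, if_pos hk]
      intro hcontra
      have := congrFun hcontra 0
      simp at this
    · simp only [hv_def, if_neg hk]
      intro hcontra
      apply hk
      funext i
      fin_cases i
      · have := congrFun hcontra 1
        simpa using this
      · have := congrFun hcontra 0
        simpa using this
  have hkv : (k 0 : ℂ) * (v 0) + (k 1) * (v 1) = 0 := by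
    by_cases hk : k = 0
    · simp [hk]
    · simp only [hv_def, if_neg hk]
      push_cast
      simp [Matrix.cons_val_zero, Matrix.cons_val_one]
      ring
  set w : ℝ → Torus 2 := fun t => tmap (fun i => t * (v i : ℝ)) with hw_def
  have hw_cont : Continuous w := tmap_continuous.comp (by continuity)
  -- the character is constant along the direction v
  have hchar : ∀ t : ℝ, char (-k) (w t) = 1 := by
    intro t
    rw [hw_def, char_tmap]
    rw [Fin.sum_univ_two]
    have : ((-k) 0 : ℂ) * ((t * (v 0 : ℝ) : ℝ) : ℂ) + ((-k) 1 : ℂ) * ((t * (v 1 : ℝ) : ℝ) : ℂ)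
        = -(t : ℂ) * ((k 0 : ℂ) * (v 0) + (k 1) * (v 1)) := by
      simp only [Pi.neg_apply]
      push_cast
      ring
    rw [this, hkv, mul_zero, mul_zero, Complex.exp_zero]
  -- the restricted Lebesgue measure on (0,1]
  set ρ : Measure ℝ := volume.restrict (Set.Ioc (0:ℝ) 1) with hρ
  have hρ_prob : IsProbabilityMeasure ρ := by
    constructor
    rw [hρ, Measure.restrict_apply MeasurableSet.univ, Set.univ_inter, Real.volume_Ioc]
    norm_num
  -- the skew translation is measure preserving
  have hΨ : MeasurePreserving (fun q : ℝ × Torus 2 => (q.1, q.2 + w q.1))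
      (ρ.prod μT) (ρ.prod μT) := by
    apply (MeasurePreserving.id ρ).skew_product (g := fun t x => x + w t) (μd := μT)
    · exact measurable_snd.add (hw_cont.measurable.comp measurable_fst)
    · exact Filter.Eventually.of_forall fun t => map_add_right_eq_self μT (w t)
  have hsnd : MeasurePreserving (Prod.snd : ℝ × Torus 2 → Torus 2) (ρ.prod μT) μT := by
    refine ⟨measurable_snd, ?_⟩
    rw [Measure.map_snd_prod, measure_univ, one_smul]
  have hbase : Integrable (fun q : ℝ × Torus 2 => f q.2) (ρ.prod μT) :=
    (hsnd.integrable_comp hf.aestronglyMeasurable).2 hf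
  have hcomp : Integrable (fun q : ℝ × Torus 2 => f (q.2 + w q.1)) (ρ.prod μT) :=
    (hΨ.integrable_comp hbase.aestronglyMeasurable).2 hbase
  have hG : Integrable (fun q : ℝ × Torus 2 => char (-k) q.2 * f (q.2 + w q.1)) (ρ.prod μT) :=
    hcomp.bdd_mul (((char_continuous (-k)).comp continuous_snd).aestronglyMeasurable)
      (c := 1) (Filter.Eventually.of_forall fun q => le_of_eq (norm_char _ _))
  have h3 : Integrable (Function.uncurry fun (x : Torus 2) (t : ℝ) =>
      char (-k) x * f (x + w t)) (μT.prod ρ) := by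
    have := hG.swap
    exact this
  -- pointwise identity for the xray integrand
  have hx : ∀ x : Torus 2, char (-k) x * xray v f x
      = ∫ t, char (-k) x * f (x + w t) ∂ρ := by
    intro x
    rw [xray, intervalIntegral.integral_of_le zero_le_one, ← integral_const_mul]
  -- the integral against the character vanishes
  have hzero : ∫ x, char (-k) x * xray v f x ∂μT = 0 := by
    have hcong : (fun x => char (-k) x * xray v f x) =ᵐ[μT] (fun _ => (0:ℂ)) := by
      filter_upwards [h v hv] with x hx'
      rw [hx', mul_zero]
    rw [integral_congr_ae hcong, integral_const, smul_zero]
  -- each slice integral equals the Fourier coefficient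
  have hslice : ∀ t : ℝ, ∫ x, char (-k) x * f (x + w t) ∂μT = fCoeff f k := by
    intro t
    have hptwise : ∀ x : Torus 2, char (-k) x * f (x + w t)
        = char (-k) (x + w t) * f (x + w t) := fun x => by
      rw [char_add, hchar t, mul_one]
    simp_rw [hptwise]
    exact integral_add_right_eq_self (fun y => char (-k) y * f y) (w t)
  -- put the pieces together
  have swap := integral_integral_swap h3
  have step1 : ∫ x, char (-k) x * xray v f x ∂μT
      = ∫ x, ∫ t, char (-k) x * f (x + w t) ∂ρ ∂μT := by
    exact integral_congr_ae (Filter.Eventually.of_forall fun x => hx x)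
  have step2 : ∫ t, ∫ x, char (-k) x * f (x + w t) ∂μT ∂ρ = fCoeff f k := by
    rw [integral_congr_ae (Filter.Eventually.of_forall fun t => hslice t),
      integral_const, probReal_univ, one_smul]
  rw [← step2, ← swap, ← step1, hzero]

end Aux

theorem xray_injective_on_L1
    (f : Torus 2 → ℂ) (hf : Integrable f (volume : Measure (Torus 2)))
    (h : ∀ v : Fin 2 → ℤ, v ≠ 0 → ∀ᵐ x : Torus 2, xray v f x = 0) :
    f =ᵐ[(volume : Measure (Torus 2))] 0 :=
  torus_ae_eq_zero f hf (fun k => fCoeff_eq_zero_of_xray f hf h k)
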